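/- Let Q̂₁ and Q̂₂ be functions of the form Q̂ᵢ(s,a) = (φ(s,a)ᵀwᵢ - βᵢ||φ(s,a)||_{Λᵢ}) · σ(-β_w||φ(s,a)||_{Λᵢ} + log K), where ||φ(s,a)||_2 ≤ 1 for all (s,a), |βᵢ| ≤ C_β, ||wᵢ||_2 ≤ C_w, (2K)^{-1}I ⪯ Λᵢ ⪯ I, with constants 1 ≤ β_w, C_w, C_β and K ≥ 1. Then sup_{(s,a)} |Q̂₁(s,a) - Q̂₂(s,a)| ≤ 4√K · β_w · max{C_w, C_β} · √(|β₁-β₂|² + ||w₁-w₂||₂² + ||Λ₁-Λ₂||_F²). -/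

import Mathlib

open Matrix Finset

private lemma sig_lip (a b : ℝ) :
    |(1 + Real.exp (-a))⁻¹ - (1 + Real.exp (-b))⁻¹| ≤ (1/4) * |a - b| := by
  have hd : ∀ z : ℝ, HasDerivAt (fun z : ℝ => (1 + Real.exp (-z))⁻¹)
      (Real.exp (-z) / (1 + Real.exp (-z)) ^ 2) z := by
    intro z
    have h1 : HasDerivAt (fun z : ℝ => 1 + Real.exp (-z)) (-Real.exp (-z)) z := by
      simpa using ((Real.hasDerivAt_exp (-z)).comp z (hasDerivAt_neg z)).const_add 1
    have hne : (1 + Real.exp (-z)) ≠ 0 := by positivity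
    exact (h1.inv hne).congr_deriv (by ring)
  have hL : LipschitzWith (1/4 : NNReal) (fun z : ℝ => (1 + Real.exp (-z))⁻¹) := by
    apply lipschitzWith_of_nnnorm_deriv_le (fun z => (hd z).differentiableAt)
    intro z
    rw [(hd z).deriv, ← NNReal.coe_le_coe, coe_nnnorm, Real.norm_eq_abs,
      abs_of_nonneg (by positivity)]
    push_cast
    rw [div_le_iff₀ (by positivity)]
    nlinarith [Real.exp_pos (-z), sq_nonneg (1 - Real.exp (-z))]
  have := hL.dist_le_mul a b
  rwa [Real.dist_eq, Real.dist_eq, NNReal.coe_div, NNReal.coe_one] at this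

private lemma abs_dot_le {n : Type*} [Fintype n] (x y : n → ℝ) :
    |x ⬝ᵥ y| ≤ Real.sqrt (x ⬝ᵥ x) * Real.sqrt (y ⬝ᵥ y) := by
  have hx0 : 0 ≤ x ⬝ᵥ x := Finset.sum_nonneg fun i _ => mul_self_nonneg (x i)
  have hy0 : 0 ≤ y ⬝ᵥ y := Finset.sum_nonneg fun i _ => mul_self_nonneg (y i)
  have h := sum_mul_sq_le_sq_mul_sq Finset.univ x y
  rw [← Real.sqrt_sq_eq_abs, ← Real.sqrt_mul hx0]
  apply Real.sqrt_le_sqrt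
  calc (x ⬝ᵥ y) ^ 2 ≤ (∑ i, x i ^ 2) * ∑ i, y i ^ 2 := h
    _ = (x ⬝ᵥ x) * (y ⬝ᵥ y) := by
        simp [dotProduct, sq]

private lemma frob_bound {n : Type*} [Fintype n] (M : Matrix n n ℝ) (x : n → ℝ) :
    |x ⬝ᵥ M *ᵥ x| ≤ Real.sqrt (∑ i, ∑ j, (M i j) ^ 2) * (x ⬝ᵥ x) := by
  have hx0 : 0 ≤ x ⬝ᵥ x := Finset.sum_nonneg fun i _ => mul_self_nonneg (x i)
  have hM0 : 0 ≤ ∑ i, ∑ j, (M i j) ^ 2 :=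
    Finset.sum_nonneg fun i _ => Finset.sum_nonneg fun j _ => sq_nonneg _
  have e1 : x ⬝ᵥ M *ᵥ x = ∑ p : n × n, M p.1 p.2 * (x p.1 * x p.2) := by
    rw [Fintype.sum_prod_type]
    simp only [dotProduct, Matrix.mulVec, Finset.mul_sum]
    exact Finset.sum_congr rfl fun i _ => Finset.sum_congr rfl fun j _ => by ring
  have e2 : ∑ p : n × n, (x p.1 * x p.2) ^ 2 = (x ⬝ᵥ x) ^ 2 := by
    have hxx : x ⬝ᵥ x = ∑ i, x i ^ 2 := by simp [dotProduct, sq]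
    rw [hxx, Fintype.sum_prod_type, sq (∑ i, x i ^ 2), Finset.sum_mul]
    exact Finset.sum_congr rfl fun i _ => by
      rw [Finset.mul_sum]
      exact Finset.sum_congr rfl fun j _ => by ring
  have e3 : ∑ i, ∑ j, (M i j) ^ 2 = ∑ p : n × n, (M p.1 p.2) ^ 2 :=
    by rw [Fintype.sum_prod_type]
  have h := sum_mul_sq_le_sq_mul_sq (Finset.univ : Finset (n × n))
      (fun p => M p.1 p.2) (fun p => x p.1 * x p.2)
  have key : (x ⬝ᵥ M *ᵥ x) ^ 2 ≤ (∑ i, ∑ j, (M i j) ^ 2) * (x ⬝ᵥ x) ^ 2 := by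
    rw [e1, e3, ← e2]; exact h
  calc |x ⬝ᵥ M *ᵥ x| = Real.sqrt ((x ⬝ᵥ M *ᵥ x) ^ 2) := (Real.sqrt_sq_eq_abs _).symm
    _ ≤ Real.sqrt ((∑ i, ∑ j, (M i j) ^ 2) * (x ⬝ᵥ x) ^ 2) := Real.sqrt_le_sqrt key
    _ = Real.sqrt (∑ i, ∑ j, (M i j) ^ 2) * (x ⬝ᵥ x) := by
        rw [Real.sqrt_mul hM0, Real.sqrt_sq hx0]

private lemma psd_dot {n : Type*} [Fintype n] {M : Matrix n n ℝ} (h : M.PosSemidef)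
    (x : n → ℝ) : 0 ≤ x ⬝ᵥ M *ᵥ x := by
  simpa using h.dotProduct_mulVec_nonneg x

set_option maxHeartbeats 1600000 in
theorem lipschitz_Q_estimate (d : ℕ) (S A : Type*)
    (φ : S → A → Fin d → ℝ) (hφ : ∀ s a, φ s a ⬝ᵥ φ s a ≤ 1)
    (K βw Cw Cβ : ℝ) (hK : 1 ≤ K) (hβw : 1 ≤ βw) (hCw : 1 ≤ Cw) (hCβ : 1 ≤ Cβ)
    (β₁ β₂ : ℝ) (hβ₁ : |β₁| ≤ Cβ) (hβ₂ : |β₂| ≤ Cβ)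
    (w₁ w₂ : Fin d → ℝ)
    (hw₁ : Real.sqrt (w₁ ⬝ᵥ w₁) ≤ Cw) (hw₂ : Real.sqrt (w₂ ⬝ᵥ w₂) ≤ Cw)
    (Λ₁ Λ₂ : Matrix (Fin d) (Fin d) ℝ)
    (hΛ₁lo : (Λ₁ - (2 * K)⁻¹ • (1 : Matrix (Fin d) (Fin d) ℝ)).PosSemidef)
    (hΛ₁hi : ((1 : Matrix (Fin d) (Fin d) ℝ) - Λ₁).PosSemidef)
    (hΛ₂lo : (Λ₂ - (2 * K)⁻¹ • (1 : Matrix (Fin d) (Fin d) ℝ)).PosSemidef)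
    (hΛ₂hi : ((1 : Matrix (Fin d) (Fin d) ℝ) - Λ₂).PosSemidef) :
    ∀ s a,
      |(φ s a ⬝ᵥ w₁ - β₁ * Real.sqrt (φ s a ⬝ᵥ Λ₁ *ᵥ φ s a)) *
          (1 / (1 + Real.exp (-(-βw * Real.sqrt (φ s a ⬝ᵥ Λ₁ *ᵥ φ s a) + Real.log K))))
        - (φ s a ⬝ᵥ w₂ - β₂ * Real.sqrt (φ s a ⬝ᵥ Λ₂ *ᵥ φ s a)) *
          (1 / (1 + Real.exp (-(-βw * Real.sqrt (φ s a ⬝ᵥ Λ₂ *ᵥ φ s a) + Real.log K))))| ≤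
      4 * Real.sqrt K * βw * max Cw Cβ *
        Real.sqrt (|β₁ - β₂| ^ 2 + (∑ i, (w₁ i - w₂ i) ^ 2) +
          (∑ i, ∑ j, (Λ₁ i j - Λ₂ i j) ^ 2)) := by
  intro s a
  set x : Fin d → ℝ := φ s a with hx
  set c : ℝ := x ⬝ᵥ x with hcdef
  have hc0 : 0 ≤ c := Finset.sum_nonneg fun i _ => mul_self_nonneg (x i)
  have hc1 : c ≤ 1 := hφ s a
  set q₁ : ℝ := x ⬝ᵥ Λ₁ *ᵥ x with hq₁def
  set q₂ : ℝ := x ⬝ᵥ Λ₂ *ᵥ x with hq₂def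
  have ht0 : (0:ℝ) < (2 * K)⁻¹ := by positivity
  -- bounds on q
  have hqhi : ∀ (Λ : Matrix (Fin d) (Fin d) ℝ),
      ((1 : Matrix (Fin d) (Fin d) ℝ) - Λ).PosSemidef → x ⬝ᵥ Λ *ᵥ x ≤ c := by
    intro Λ h
    have := psd_dot h x
    rw [Matrix.sub_mulVec, Matrix.one_mulVec, dotProduct_sub] at this
    linarith
  have hqlo : ∀ (Λ : Matrix (Fin d) (Fin d) ℝ),
      (Λ - (2 * K)⁻¹ • (1 : Matrix (Fin d) (Fin d) ℝ)).PosSemidef →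
      (2 * K)⁻¹ * c ≤ x ⬝ᵥ Λ *ᵥ x := by
    intro Λ h
    have := psd_dot h x
    rw [Matrix.sub_mulVec, Matrix.smul_mulVec, Matrix.one_mulVec, dotProduct_sub,
      dotProduct_smul] at this
    simpa [smul_eq_mul] using this
  have hq₁lo : (2 * K)⁻¹ * c ≤ q₁ := hqlo Λ₁ hΛ₁lo
  have hq₂lo : (2 * K)⁻¹ * c ≤ q₂ := hqlo Λ₂ hΛ₂lo
  have hq₁hi : q₁ ≤ c := hqhi Λ₁ hΛ₁hi
  have hq₂hi : q₂ ≤ c := hqhi Λ₂ hΛ₂hi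
  have hq₁0 : 0 ≤ q₁ := le_trans (by positivity) hq₁lo
  have hq₂0 : 0 ≤ q₂ := le_trans (by positivity) hq₂lo
  set n₁ : ℝ := Real.sqrt q₁ with hn₁def
  set n₂ : ℝ := Real.sqrt q₂ with hn₂def
  have hn₁0 : 0 ≤ n₁ := Real.sqrt_nonneg _
  have hn₂0 : 0 ≤ n₂ := Real.sqrt_nonneg _
  have hn₁1 : n₁ ≤ 1 := Real.sqrt_le_one.2 (le_trans hq₁hi hc1)
  have hn₂1 : n₂ ≤ 1 := Real.sqrt_le_one.2 (le_trans hq₂hi hc1)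
  set F : ℝ := Real.sqrt (∑ i, ∑ j, (Λ₁ i j - Λ₂ i j) ^ 2) with hFdef
  have hF0 : 0 ≤ F := Real.sqrt_nonneg _
  have hsK : 1 ≤ Real.sqrt K := by
    rw [show (1:ℝ) = Real.sqrt 1 by simp]
    exact Real.sqrt_le_sqrt hK
  -- |q₁ - q₂| ≤ F * c
  have hqdiff : |q₁ - q₂| ≤ F * c := by
    have e : q₁ - q₂ = x ⬝ᵥ (Λ₁ - Λ₂) *ᵥ x := by
      rw [Matrix.sub_mulVec, dotProduct_sub]
    rw [e]
    have := frob_bound (Λ₁ - Λ₂) x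
    simpa [Matrix.sub_apply] using this
  -- |n₁ - n₂| ≤ √K * F
  have hndiff : |n₁ - n₂| ≤ Real.sqrt K * F := by
    rcases eq_or_lt_of_le hc0 with hc | hc
    · have hq₁z : q₁ = 0 := le_antisymm (by rw [← hc] at hq₁hi; exact hq₁hi) hq₁0
      have hq₂z : q₂ = 0 := le_antisymm (by rw [← hc] at hq₂hi; exact hq₂hi) hq₂0
      simp [hn₁def, hn₂def, hq₁z, hq₂z]
      positivity
    · have hn₁lo : Real.sqrt ((2 * K)⁻¹ * c) ≤ n₁ := Real.sqrt_le_sqrt hq₁lo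
      have hn₂lo : Real.sqrt ((2 * K)⁻¹ * c) ≤ n₂ := Real.sqrt_le_sqrt hq₂lo
      have hslo : 0 < Real.sqrt ((2 * K)⁻¹ * c) := Real.sqrt_pos.mpr (by positivity)
      have hsum : 0 < n₁ + n₂ := by linarith
      rw [← mul_le_mul_iff_left₀ hsum]
      have e : |n₁ - n₂| * (n₁ + n₂) = |q₁ - q₂| := by
        rw [← abs_of_nonneg hsum.le, ← abs_mul]
        congr 1
        have h1 : n₁ * n₁ = q₁ := Real.mul_self_sqrt hq₁0
        have h2 : n₂ * n₂ = q₂ := Real.mul_self_sqrt hq₂0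
        nlinarith
      rw [e]
      -- |q₁ - q₂| ≤ F * c ≤ √K * F * (n₁ + n₂)
      refine hqdiff.trans ?_
      have hc' : c ≤ Real.sqrt K * (n₁ + n₂) := by
        have h1 : Real.sqrt K * (n₁ + n₂) ≥ Real.sqrt K * (2 * Real.sqrt ((2 * K)⁻¹ * c)) := by
          have : 2 * Real.sqrt ((2 * K)⁻¹ * c) ≤ n₁ + n₂ := by linarith
          exact mul_le_mul_of_nonneg_left this (by positivity)
        have h2 : Real.sqrt K * (2 * Real.sqrt ((2 * K)⁻¹ * c)) = 2 * Real.sqrt (c / 2) := by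
          have hKne : K ≠ 0 := by linarith
          rw [show Real.sqrt K * (2 * Real.sqrt ((2 * K)⁻¹ * c)) =
              2 * (Real.sqrt K * Real.sqrt ((2 * K)⁻¹ * c)) by ring,
            ← Real.sqrt_mul (by linarith : (0:ℝ) ≤ K)]
          congr 1
          field_simp
        have h3 : Real.sqrt c ≤ 2 * Real.sqrt (c / 2) := by
          rw [show (2:ℝ) * Real.sqrt (c / 2) = Real.sqrt 4 * Real.sqrt (c / 2) by
            rw [show (4:ℝ) = 2^2 by norm_num, Real.sqrt_sq (by norm_num)],
            ← Real.sqrt_mul (by norm_num)]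
          exact Real.sqrt_le_sqrt (by linarith)
        have h4 : c ≤ Real.sqrt c := by
          nlinarith [Real.sq_sqrt hc0, Real.sqrt_nonneg c, Real.sqrt_le_one.2 hc1]
        linarith
      calc F * c ≤ F * (Real.sqrt K * (n₁ + n₂)) :=
            mul_le_mul_of_nonneg_left hc' hF0
        _ = Real.sqrt K * F * (n₁ + n₂) := by ring
  -- dot product bounds
  have hscale : Real.sqrt c ≤ 1 := Real.sqrt_le_one.2 hc1
  have hdot : ∀ w : Fin d → ℝ, |x ⬝ᵥ w| ≤ Real.sqrt (w ⬝ᵥ w) := by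
    intro w
    refine (abs_dot_le x w).trans ?_
    calc Real.sqrt c * Real.sqrt (w ⬝ᵥ w) ≤ 1 * Real.sqrt (w ⬝ᵥ w) :=
          mul_le_mul_of_nonneg_right hscale (Real.sqrt_nonneg _)
      _ = Real.sqrt (w ⬝ᵥ w) := one_mul _
  have hdotw : |x ⬝ᵥ (w₁ - w₂)| ≤ Real.sqrt (∑ i, (w₁ i - w₂ i) ^ 2) := by
    refine (hdot (w₁ - w₂)).trans ?_
    apply Real.sqrt_le_sqrt
    apply le_of_eq
    simp [dotProduct, sq]
  have hdot₂ : |x ⬝ᵥ w₂| ≤ Cw := (hdot w₂).trans hw₂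
  -- sigmoid values
  set z₁ : ℝ := -βw * n₁ + Real.log K with hz₁def
  set z₂ : ℝ := -βw * n₂ + Real.log K with hz₂def
  set σ₁ : ℝ := 1 / (1 + Real.exp (-z₁)) with hσ₁def
  set σ₂ : ℝ := 1 / (1 + Real.exp (-z₂)) with hσ₂def
  have hσ₁0 : 0 ≤ σ₁ := by positivity
  have hσ₁1 : σ₁ ≤ 1 := by
    rw [hσ₁def, div_le_one (by positivity)]
    linarith only [Real.exp_pos (-z₁)]
  have hσdiff : |σ₁ - σ₂| ≤ (βw / 4) * |n₁ - n₂| := by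
    have h := sig_lip z₁ z₂
    rw [hσ₁def, hσ₂def, one_div, one_div]
    refine h.trans ?_
    have : |z₁ - z₂| = βw * |n₁ - n₂| := by
      rw [hz₁def, hz₂def]
      rw [show -βw * n₁ + Real.log K - (-βw * n₂ + Real.log K) = -(βw * (n₁ - n₂)) by ring,
        abs_neg, abs_mul, abs_of_nonneg (by linarith : (0:ℝ) ≤ βw)]
    rw [this]
    exact le_of_eq (by ring)
  -- main decomposition
  set g₁ : ℝ := x ⬝ᵥ w₁ - β₁ * n₁ with hg₁def
  set g₂ : ℝ := x ⬝ᵥ w₂ - β₂ * n₂ with hg₂def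
  have hg₂bd : |g₂| ≤ Cw + Cβ := by
    rw [hg₂def]
    refine (abs_sub _ _).trans ?_
    have h1 : |β₂ * n₂| ≤ Cβ := by
      rw [abs_mul, abs_of_nonneg hn₂0]
      exact (mul_le_of_le_one_right (abs_nonneg β₂) hn₂1).trans hβ₂
    linarith only [h1, hdot₂]
  set W : ℝ := Real.sqrt (∑ i, (w₁ i - w₂ i) ^ 2) with hWdef
  have hW0 : 0 ≤ W := Real.sqrt_nonneg _
  have hgdiff : |g₁ - g₂| ≤ W + |β₁ - β₂| + Cβ * (Real.sqrt K * F) := by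
    have e : g₁ - g₂ = x ⬝ᵥ (w₁ - w₂) + (-((β₁ - β₂) * n₁)) + (-(β₂ * (n₁ - n₂))) := by
      rw [hg₁def, hg₂def, dotProduct_sub]
      ring
    rw [e]
    refine (abs_add_le _ _).trans ?_
    have h1 : |x ⬝ᵥ (w₁ - w₂) + -((β₁ - β₂) * n₁)| ≤ W + |β₁ - β₂| := by
      refine (abs_add_le _ _).trans ?_
      have : |(-((β₁ - β₂) * n₁))| ≤ |β₁ - β₂| := by
        rw [abs_neg, abs_mul, abs_of_nonneg hn₁0]
        exact mul_le_of_le_one_right (abs_nonneg _) hn₁1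
      linarith only [hdotw, this]
    have h2 : |(-(β₂ * (n₁ - n₂)))| ≤ Cβ * (Real.sqrt K * F) := by
      rw [abs_neg, abs_mul]
      have hKF : |n₁ - n₂| ≤ Real.sqrt K * F := hndiff
      have : |β₂| * |n₁ - n₂| ≤ Cβ * (Real.sqrt K * F) := by
        apply mul_le_mul hβ₂ hKF (abs_nonneg _) (by linarith only [hCβ])
      exact this
    linarith only [h1, h2]
  -- Combine
  set D : ℝ := Real.sqrt (|β₁ - β₂| ^ 2 + (∑ i, (w₁ i - w₂ i) ^ 2) +
      (∑ i, ∑ j, (Λ₁ i j - Λ₂ i j) ^ 2)) with hDdef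
  have hD0 : 0 ≤ D := Real.sqrt_nonneg _
  have hsumw : 0 ≤ ∑ i, (w₁ i - w₂ i) ^ 2 := Finset.sum_nonneg fun i _ => sq_nonneg _
  have hsumΛ : 0 ≤ ∑ i, ∑ j, (Λ₁ i j - Λ₂ i j) ^ 2 :=
    Finset.sum_nonneg fun i _ => Finset.sum_nonneg fun j _ => sq_nonneg _
  have hβD : |β₁ - β₂| ≤ D := by
    calc |β₁ - β₂| = Real.sqrt (|β₁ - β₂| ^ 2) := by
          rw [Real.sqrt_sq_eq_abs, abs_abs]
      _ ≤ D := by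
          rw [hDdef]
          exact Real.sqrt_le_sqrt (by linarith only [hsumw, hsumΛ])
  have hWD : W ≤ D := Real.sqrt_le_sqrt (by linarith only [sq_nonneg (|β₁ - β₂|), hsumΛ])
  have hFD : F ≤ D := Real.sqrt_le_sqrt (by linarith only [sq_nonneg (|β₁ - β₂|), hsumw])
  -- |g₁σ₁ - g₂σ₂| bound
  have hLHS : |g₁ * σ₁ - g₂ * σ₂| ≤ |g₁ - g₂| + |g₂| * |σ₁ - σ₂| := by
    have e : g₁ * σ₁ - g₂ * σ₂ = (g₁ - g₂) * σ₁ + g₂ * (σ₁ - σ₂) := by ring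
    rw [e]
    refine (abs_add_le _ _).trans ?_
    rw [abs_mul, abs_mul]
    have : |g₁ - g₂| * |σ₁| ≤ |g₁ - g₂| := by
      rw [abs_of_nonneg hσ₁0]
      exact mul_le_of_le_one_right (abs_nonneg _) hσ₁1
    linarith only [this]
  set M : ℝ := max Cw Cβ with hMdef
  have hM1 : 1 ≤ M := le_trans hCw (le_max_left _ _)
  have hCwM : Cw ≤ M := le_max_left _ _
  have hCβM : Cβ ≤ M := le_max_right _ _
  have hM0 : (0:ℝ) ≤ M := by linarith only [hM1]
  have hsK0 : (0:ℝ) ≤ Real.sqrt K := Real.sqrt_nonneg K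
  have hβw0 : (0:ℝ) ≤ βw := by linarith only [hβw]
  have hfinal : |g₁ * σ₁ - g₂ * σ₂| ≤ 4 * Real.sqrt K * βw * M * D := by
    have hKF' : Cβ * (Real.sqrt K * F) ≤ Real.sqrt K * βw * M * D := by
      have h1 : Cβ * F ≤ M * D := mul_le_mul hCβM hFD hF0 hM0
      calc Cβ * (Real.sqrt K * F) = Real.sqrt K * (Cβ * F) := by ring
        _ ≤ Real.sqrt K * (M * D) := mul_le_mul_of_nonneg_left h1 hsK0
        _ ≤ βw * (Real.sqrt K * (M * D)) :=
            le_mul_of_one_le_left (mul_nonneg hsK0 (mul_nonneg hM0 hD0)) hβw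
        _ = Real.sqrt K * βw * M * D := by ring
    have hσterm : |g₂| * |σ₁ - σ₂| ≤ (Cw + Cβ) * ((βw / 4) * (Real.sqrt K * F)) := by
      have h1 : |σ₁ - σ₂| ≤ (βw / 4) * (Real.sqrt K * F) := by
        refine hσdiff.trans ?_
        exact mul_le_mul_of_nonneg_left hndiff (by linarith only [hβw])
      exact mul_le_mul hg₂bd h1 (abs_nonneg _) (by linarith only [hCw, hCβ])
    have hσterm2 : (Cw + Cβ) * ((βw / 4) * (Real.sqrt K * F)) ≤
        (1/2) * (Real.sqrt K * βw * M * D) := by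
      have h1 : (Cw + Cβ) ≤ 2 * M := by
        have h1a := le_max_left Cw Cβ
        have h1b := le_max_right Cw Cβ
        rw [hMdef]
        linarith only [h1a, h1b]
      calc (Cw + Cβ) * ((βw / 4) * (Real.sqrt K * F))
          ≤ (2 * M) * ((βw / 4) * (Real.sqrt K * F)) :=
            mul_le_mul_of_nonneg_right h1
              (mul_nonneg (by linarith only [hβw]) (mul_nonneg hsK0 hF0))
        _ = (βw / 2) * (Real.sqrt K * (M * F)) := by ring
        _ ≤ (βw / 2) * (Real.sqrt K * (M * D)) := by
            refine mul_le_mul_of_nonneg_left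
              (mul_le_mul_of_nonneg_left (mul_le_mul_of_nonneg_left hFD hM0) hsK0)
              (by linarith only [hβw])
        _ = (1/2) * (Real.sqrt K * βw * M * D) := by ring
    have hX1 : 1 ≤ Real.sqrt K * βw * M := by
      calc (1:ℝ) = 1 * 1 * 1 := by norm_num
        _ ≤ Real.sqrt K * βw * M :=
            mul_le_mul (mul_le_mul hsK hβw zero_le_one hsK0) hM1 zero_le_one
              (mul_nonneg hsK0 hβw0)
    have h2D : D ≤ Real.sqrt K * βw * M * D := by
      have := mul_le_mul_of_nonneg_right hX1 hD0
      linarith only [this]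
    have hXD0 : 0 ≤ Real.sqrt K * βw * M * D :=
      mul_nonneg (mul_nonneg (mul_nonneg hsK0 hβw0) hM0) hD0
    calc |g₁ * σ₁ - g₂ * σ₂| ≤ |g₁ - g₂| + |g₂| * |σ₁ - σ₂| := hLHS
      _ ≤ (W + |β₁ - β₂| + Cβ * (Real.sqrt K * F)) +
          (Cw + Cβ) * ((βw / 4) * (Real.sqrt K * F)) := by linarith only [hgdiff, hσterm]
      _ ≤ (D + D + Real.sqrt K * βw * M * D) + (1/2) * (Real.sqrt K * βw * M * D) := by
          linarith only [hWD, hβD, hKF', hσterm2]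
      _ ≤ 4 * Real.sqrt K * βw * M * D := by linarith only [h2D, hXD0]
  exact hfinal
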